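/- Under the hypotheses of the Read–Bajraktarević construction with contraction ratios t_p < 1, there exists a unique continuous function g : [x_0, x_P] → ℝ with g(x_0) = y_0, g(x_P) = y_P that is a fixed point of the operator T; equivalently, g is the unique function in C satisfying the functional (self-referential) equation g(l_p(x)) = F_p(x, g(x)) for all x ∈ [x_0, x_P] and all p = 1,...,P. -/

import Mathlib

/-- under the Read–Bajraktarević hypotheses with contraction ratios
`t p < 1`, there exists a unique continuous function `g : [x 0, x P] → ℝ` with
`g (x 0) = y 0`, `g (x P) = y P` satisfying the self-referential functional equation
`g (l p s) = F p s (g s)` for all `s ∈ [x 0, x P]` and all `p = 1, ..., P`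
(equivalently, `g` is the unique fixed point of `T` in `C`). -/
theorem stmt_4 (P : ℕ) (hP : 1 ≤ P) (x y : ℕ → ℝ)
    (hx : ∀ i, i < P → x i < x (i + 1))
    (a b : ℕ → ℝ)
    (ha : ∀ p, 1 ≤ p → p ≤ P → 0 < a p)
    (hl0 : ∀ p, 1 ≤ p → p ≤ P → a p * x 0 + b p = x (p - 1))
    (hlP : ∀ p, 1 ≤ p → p ≤ P → a p * x P + b p = x p)
    (F : ℕ → ℝ → ℝ → ℝ) (t : ℕ → ℝ)
    (hFcont : ∀ p, 1 ≤ p → p ≤ P → ∀ v : ℝ,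
      ContinuousOn (fun s : ℝ => F p s v) (Set.Icc (x 0) (x P)))
    (hF0 : ∀ p, 1 ≤ p → p ≤ P → F p (x 0) (y 0) = y (p - 1))
    (hFP : ∀ p, 1 ≤ p → p ≤ P → F p (x P) (y P) = y p)
    (ht : ∀ p, 1 ≤ p → p ≤ P → 0 < t p ∧ t p < 1)
    (hFlip : ∀ p, 1 ≤ p → p ≤ P → ∀ s ∈ Set.Icc (x 0) (x P), ∀ u v : ℝ,
      |F p s u - F p s v| ≤ t p * |u - v|) :
    ∃ g : ℝ → ℝ,
      (ContinuousOn g (Set.Icc (x 0) (x P)) ∧ g (x 0) = y 0 ∧ g (x P) = y P ∧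
        ∀ p, 1 ≤ p → p ≤ P → ∀ s ∈ Set.Icc (x 0) (x P),
          g (a p * s + b p) = F p s (g s)) ∧
      ∀ g' : ℝ → ℝ,
        (ContinuousOn g' (Set.Icc (x 0) (x P)) ∧ g' (x 0) = y 0 ∧ g' (x P) = y P ∧
          ∀ p, 1 ≤ p → p ≤ P → ∀ s ∈ Set.Icc (x 0) (x P),
            g' (a p * s + b p) = F p s (g' s)) →
        ∀ u ∈ Set.Icc (x 0) (x P), g' u = g u := by
  classical
  set I : Set ℝ := Set.Icc (x 0) (x P) with hI_def
  -- monotonicity of the knots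
  have hxmono : ∀ j, j ≤ P → ∀ i, i ≤ j → x i ≤ x j := by
    intro j
    induction j with
    | zero =>
      intro _ i hi
      obtain rfl := Nat.le_zero.mp hi
      exact le_rfl
    | succ k ih =>
      intro hk i hi
      rcases Nat.lt_or_ge i (k + 1) with h | h
      · exact le_trans (ih (by omega) i (by omega)) (le_of_lt (hx k (by omega)))
      · obtain rfl : i = k + 1 := le_antisymm hi h
        exact le_rfl
  have hxm : ∀ i j, i ≤ j → j ≤ P → x i ≤ x j := fun i j h1 h2 => hxmono j h2 i h1
  have hx0P : x 0 ≤ x P := hxm 0 P (by omega) le_rfl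
  have hx0P' : x 0 < x P := lt_of_lt_of_le (hx 0 (by omega)) (hxm 1 P hP le_rfl)
  have hx0I : x 0 ∈ I := Set.left_mem_Icc.mpr hx0P
  have hxPI : x P ∈ I := Set.right_mem_Icc.mpr hx0P
  -- inverse of the affine maps
  have hinvval : ∀ p, 1 ≤ p → p ≤ P → ∀ v u : ℝ, a p * v + b p = u → (u - b p) / a p = v := by
    intro p h1 h2 v u h
    have hap := ha p h1 h2
    field_simp
    linarith
  have hmapsinv : ∀ p, 1 ≤ p → p ≤ P → ∀ u : ℝ, x (p - 1) ≤ u → u ≤ x p → (u - b p) / a p ∈ I := by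
    intro p h1 h2 u hu1 hu2
    have hap := ha p h1 h2
    have e0 := hl0 p h1 h2
    have eP := hlP p h1 h2
    constructor
    · rw [le_div_iff₀ hap]
      nlinarith
    · rw [div_le_iff₀ hap]
      nlinarith
  have hmem_l : ∀ p, 1 ≤ p → p ≤ P → ∀ s ∈ I, x (p - 1) ≤ a p * s + b p ∧ a p * s + b p ≤ x p := by
    intro p h1 h2 s hs
    have hap := ha p h1 h2
    have e0 := hl0 p h1 h2
    have eP := hlP p h1 h2
    have hs1 : x 0 ≤ s := hs.1
    have hs2 : s ≤ x P := hs.2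
    constructor <;> nlinarith
  -- boundary values of the pieces
  have hvalP : ∀ h : ℝ → ℝ, h (x P) = y P → ∀ p, 1 ≤ p → p ≤ P →
      F p ((x p - b p) / a p) (h ((x p - b p) / a p)) = y p := by
    intro h hPe p h1 h2
    rw [hinvval p h1 h2 (x P) (x p) (hlP p h1 h2), hPe, hFP p h1 h2]
  have hval0 : ∀ h : ℝ → ℝ, h (x 0) = y 0 → ∀ p, 1 ≤ p → p ≤ P →
      F p ((x (p - 1) - b p) / a p) (h ((x (p - 1) - b p) / a p)) = y (p - 1) := by
    intro h h0e p h1 h2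
    rw [hinvval p h1 h2 (x 0) (x (p - 1)) (hl0 p h1 h2), h0e, hF0 p h1 h2]
  -- the two piece formulas agree on overlaps
  have key : ∀ h : ℝ → ℝ, h (x 0) = y 0 → h (x P) = y P →
      ∀ p q : ℕ, 1 ≤ p → p ≤ P → 1 ≤ q → q ≤ P → p < q → ∀ u : ℝ,
      u ≤ x p → x (q - 1) ≤ u →
      F p ((u - b p) / a p) (h ((u - b p) / a p)) = F q ((u - b q) / a q) (h ((u - b q) / a q)) := by
    intro h h0 hPe p q hp1 hpP hq1 hqP hpq u hup huq
    have hq1p : p = q - 1 := by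
      by_contra hne
      have hplt : p < q - 1 := by omega
      have h1 : x p ≤ x (q - 2) := hxm p (q - 2) (by omega) (by omega)
      have h2 : x (q - 2) < x (q - 2 + 1) := hx (q - 2) (by omega)
      have h3 : q - 2 + 1 = q - 1 := by omega
      rw [h3] at h2
      linarith
    have hxq : x p ≤ u := by rw [hq1p]; exact huq
    have hu : u = x p := le_antisymm hup hxq
    have hxpq : x p = x (q - 1) := by rw [← hq1p]
    rw [hu, hvalP h hPe p hp1 hpP, hxpq, hval0 h h0 q hq1 hqP, ← hq1p]
  have hagree : ∀ h : ℝ → ℝ, h (x 0) = y 0 → h (x P) = y P →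
      ∀ p q : ℕ, 1 ≤ p → p ≤ P → 1 ≤ q → q ≤ P → ∀ u : ℝ,
      x (p - 1) ≤ u → u ≤ x p → x (q - 1) ≤ u → u ≤ x q →
      F p ((u - b p) / a p) (h ((u - b p) / a p)) = F q ((u - b q) / a q) (h ((u - b q) / a q)) := by
    intro h h0 hPe p q hp1 hpP hq1 hqP u h1 h2 h3 h4
    rcases lt_trichotomy p q with hlt | heq | hgt
    · exact key h h0 hPe p q hp1 hpP hq1 hqP hlt u h2 h3
    · rw [heq]
    · exact (key h h0 hPe q p hq1 hqP hp1 hpP hgt u h4 h1).symm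
  -- choice of a piece containing a given point
  have hidx_ex : ∀ u : ℝ, ∃ q : ℕ, 1 ≤ q ∧ q ≤ P ∧
      (x 0 ≤ u → u ≤ x P → x (q - 1) ≤ u ∧ u ≤ x q) := by
    intro u
    by_cases hu : x 0 ≤ u ∧ u ≤ x P
    · have main : ∀ n, n ≤ P → 1 ≤ n → u ≤ x n →
          ∃ q, 1 ≤ q ∧ q ≤ n ∧ x (q - 1) ≤ u ∧ u ≤ x q := by
        intro n
        induction n with
        | zero => intro _ h; omega
        | succ k ih =>
          intro hkP _ hun
          rcases le_or_gt u (x k) with h | h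
          · rcases Nat.eq_zero_or_pos k with rfl | hk
            · exact ⟨1, le_rfl, le_rfl, by simpa using hu.1, by simpa using hun⟩
            · obtain ⟨q, hq1, hq2, hq3, hq4⟩ := ih (by omega) hk h
              exact ⟨q, hq1, by omega, hq3, hq4⟩
          · exact ⟨k + 1, by omega, le_rfl, by simpa using h.le, hun⟩
      obtain ⟨q, hq1, hq2, hq3, hq4⟩ := main P le_rfl hP hu.2
      exact ⟨q, hq1, hq2, fun _ _ => ⟨hq3, hq4⟩⟩
    · exact ⟨1, le_rfl, hP, fun h1 h2 => absurd ⟨h1, h2⟩ hu⟩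
  choose idx hidx1 hidxP hidxI using hidx_ex
  -- the Read–Bajraktarević operator, as a map on raw functions
  set Tfun : (ℝ → ℝ) → ℝ → ℝ := fun h u =>
    F (idx u) ((u - b (idx u)) / a (idx u)) (h ((u - b (idx u)) / a (idx u))) with hTfun_def
  have hpiece : ∀ h : ℝ → ℝ, h (x 0) = y 0 → h (x P) = y P → ∀ p, 1 ≤ p → p ≤ P →
      ∀ u : ℝ, x (p - 1) ≤ u → u ≤ x p →
      Tfun h u = F p ((u - b p) / a p) (h ((u - b p) / a p)) := by
    intro h h0 hPe p hp1 hpP u hu1 hu2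
    have hu0 : x 0 ≤ u := le_trans (hxm 0 (p - 1) (by omega) (by omega)) hu1
    have huP : u ≤ x P := le_trans hu2 (hxm p P hpP le_rfl)
    obtain ⟨hq3, hq4⟩ := hidxI u hu0 huP
    simp only [hTfun_def]
    exact hagree h h0 hPe (idx u) p (hidx1 u) (hidxP u) hp1 hpP u hq3 hq4 hu1 hu2
  have hT0 : ∀ h : ℝ → ℝ, h (x 0) = y 0 → h (x P) = y P → Tfun h (x 0) = y 0 := by
    intro h h0 hPe
    have h1 : x (1 - 1) ≤ x 0 := by norm_num
    have := hpiece h h0 hPe 1 le_rfl hP (x 0) h1 (le_of_lt (hx 0 (by omega)))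
    rw [this]
    simpa using hval0 h h0 1 le_rfl hP
  have hTP : ∀ h : ℝ → ℝ, h (x 0) = y 0 → h (x P) = y P → Tfun h (x P) = y P := by
    intro h h0 hPe
    rw [hpiece h h0 hPe P hP le_rfl (x P) (hxm (P - 1) P (by omega) le_rfl) le_rfl]
    exact hvalP h hPe P hP le_rfl
  -- joint continuity of s ↦ F p s (h s)
  have hFj : ∀ p, 1 ≤ p → p ≤ P → ∀ h : ℝ → ℝ, ContinuousOn h I →
      ContinuousOn (fun s => F p s (h s)) I := by
    intro p hp1 hpP h hh s₀ hs₀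
    have h1 := (hFcont p hp1 hpP (h s₀)) s₀ hs₀
    have h2 := hh s₀ hs₀
    rw [Metric.continuousWithinAt_iff] at h1 h2 ⊢
    intro ε εpos
    obtain ⟨δ1, δ1pos, H1⟩ := h1 (ε / 2) (by positivity)
    obtain ⟨δ2, δ2pos, H2⟩ := h2 (ε / 2) (by positivity)
    refine ⟨min δ1 δ2, lt_min δ1pos δ2pos, ?_⟩
    intro s hs hds
    have htp := ht p hp1 hpP
    have e1 : dist (F p s (h s)) (F p s (h s₀)) ≤ t p * dist (h s) (h s₀) := by
      rw [Real.dist_eq, Real.dist_eq]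
      exact hFlip p hp1 hpP s hs _ _
    have e2 : dist (h s) (h s₀) < ε / 2 := H2 hs (lt_of_lt_of_le hds (min_le_right _ _))
    have e3 : dist (F p s (h s₀)) (F p s₀ (h s₀)) < ε / 2 :=
      H1 hs (lt_of_lt_of_le hds (min_le_left _ _))
    have e4 : t p * dist (h s) (h s₀) ≤ dist (h s) (h s₀) := by
      nlinarith [dist_nonneg (x := h s) (y := h s₀)]
    calc dist (F p s (h s)) (F p s₀ (h s₀))
        ≤ dist (F p s (h s)) (F p s (h s₀)) + dist (F p s (h s₀)) (F p s₀ (h s₀)) :=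
          dist_triangle _ _ _
      _ < ε := by linarith
  -- gluing continuity on a union of two closed sets
  have hglue : ∀ (f : ℝ → ℝ) (s u : Set ℝ), IsClosed s → IsClosed u →
      ContinuousOn f s → ContinuousOn f u → ContinuousOn f (s ∪ u) := by
    intro f s u hs hu hfs hfu z hz
    have l1 : ContinuousWithinAt f s z := by
      by_cases h : z ∈ s
      · exact hfs z h
      · exact continuousWithinAt_of_notMem_closure (by rwa [hs.closure_eq])
    have l2 : ContinuousWithinAt f u z := by
      by_cases h : z ∈ u
      · exact hfu z h
      · exact continuousWithinAt_of_notMem_closure (by rwa [hu.closure_eq])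
    exact l1.union l2
  have hpieceCont : ∀ h : ℝ → ℝ, ContinuousOn h I → h (x 0) = y 0 → h (x P) = y P →
      ∀ p, 1 ≤ p → p ≤ P → ContinuousOn (Tfun h) (Set.Icc (x (p - 1)) (x p)) := by
    intro h hh h0 hPe p hp1 hpP
    have hmc : Continuous (fun u : ℝ => (u - b p) / a p) :=
      (continuous_id.sub continuous_const).div_const _
    have hcomp : ContinuousOn (fun u : ℝ => F p ((u - b p) / a p) (h ((u - b p) / a p)))
        (Set.Icc (x (p - 1)) (x p)) := by
      refine ContinuousOn.comp (hFj p hp1 hpP h hh) hmc.continuousOn ?_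
      intro u hu
      exact hmapsinv p hp1 hpP u hu.1 hu.2
    exact hcomp.congr (fun u hu => hpiece h h0 hPe p hp1 hpP u hu.1 hu.2)
  have hTcont : ∀ h : ℝ → ℝ, ContinuousOn h I → h (x 0) = y 0 → h (x P) = y P →
      ContinuousOn (Tfun h) I := by
    intro h hh h0 hPe
    have main : ∀ n, n ≤ P → 1 ≤ n → ContinuousOn (Tfun h) (Set.Icc (x 0) (x n)) := by
      intro n
      induction n with
      | zero => intro _ h'; omega
      | succ k ih =>
        intro hkP _
        rcases Nat.eq_zero_or_pos k with rfl | hk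
        · simpa using hpieceCont h hh h0 hPe 1 le_rfl hP
        · have e : Set.Icc (x 0) (x (k + 1)) = Set.Icc (x 0) (x k) ∪ Set.Icc (x k) (x (k + 1)) :=
            (Set.Icc_union_Icc_eq_Icc (hxm 0 k (by omega) (by omega))
              (le_of_lt (hx k (by omega)))).symm
          rw [e]
          refine hglue _ _ _ isClosed_Icc isClosed_Icc (ih (by omega) hk) ?_
          simpa using hpieceCont h hh h0 hPe (k + 1) (by omega) hkP
    exact main P le_rfl hP
  -- the contraction constant
  have hne : (Finset.Icc 1 P).Nonempty := Finset.nonempty_Icc.mpr hP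
  set Kr : ℝ := (Finset.Icc 1 P).sup' hne t with hKr_def
  have hKle : ∀ p, 1 ≤ p → p ≤ P → t p ≤ Kr :=
    fun p h1 h2 => Finset.le_sup' t (Finset.mem_Icc.mpr ⟨h1, h2⟩)
  have hKlt : Kr < 1 := by
    rw [hKr_def, Finset.sup'_lt_iff]
    intro p hp
    rw [Finset.mem_Icc] at hp
    exact (ht p hp.1 hp.2).2
  have hK0 : 0 ≤ Kr := le_trans (ht 1 le_rfl hP).1.le (hKle 1 le_rfl hP)
  set K : NNReal := ⟨Kr, hK0⟩ with hK_def
  -- the space C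
  haveI : CompactSpace ↥I := isCompact_iff_compactSpace.mp isCompact_Icc
  set A0 : ↥I := ⟨x 0, hx0I⟩ with hA0_def
  set AP : ↥I := ⟨x P, hxPI⟩ with hAP_def
  set S : Set C(↥I, ℝ) := {f | f A0 = y 0 ∧ f AP = y P} with hS_def
  have hSclosed : IsClosed S := by
    exact (isClosed_eq (continuous_eval_const A0) continuous_const).inter
      (isClosed_eq (continuous_eval_const AP) continuous_const)
  haveI : CompleteSpace ↥S := hSclosed.completeSpace_coe
  haveI : Nonempty ↥S := by
    refine ⟨⟨⟨fun u => y 0 + (u.1 - x 0) * ((y P - y 0) / (x P - x 0)), ?_⟩, ?_, ?_⟩⟩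
    · exact continuous_const.add ((continuous_subtype_val.sub continuous_const).mul
        continuous_const)
    · show y 0 + (x 0 - x 0) * ((y P - y 0) / (x P - x 0)) = y 0
      ring
    · show y 0 + (x P - x 0) * ((y P - y 0) / (x P - x 0)) = y P
      have hd : x P - x 0 ≠ 0 := sub_ne_zero.mpr (ne_of_gt hx0P')
      field_simp
      ring
  -- extension of an element of C to a raw function
  set hfun : C(↥I, ℝ) → ℝ → ℝ := fun f u => if hu : u ∈ I then f ⟨u, hu⟩ else y 0 with hfun_def
  have hfun_eq : ∀ f : C(↥I, ℝ), ∀ u : ℝ, ∀ hu : u ∈ I, hfun f u = f ⟨u, hu⟩ := by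
    intro f u hu
    simp only [hfun_def]
    rw [dif_pos hu]
  have hfunCont : ∀ f : C(↥I, ℝ), ContinuousOn (hfun f) I := by
    intro f
    rw [continuousOn_iff_continuous_restrict]
    have e : Set.restrict I (hfun f) = f := by
      funext u
      show hfun f u.1 = f u
      exact hfun_eq f u.1 u.2
    change Continuous (Set.restrict I (hfun f))
    rw [e]
    exact f.continuous
  -- the operator on the space S
  have hTmap_ex : ∀ f : ↥S, ∃ g : ↥S, ∀ u : ↥I, g.1 u = Tfun (hfun f.1) u.1 := by
    intro f
    obtain ⟨h0, hPe⟩ := f.2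
    have hf0 : hfun f.1 (x 0) = y 0 := by rw [hfun_eq f.1 (x 0) hx0I]; exact h0
    have hfP : hfun f.1 (x P) = y P := by rw [hfun_eq f.1 (x P) hxPI]; exact hPe
    have hc : ContinuousOn (Tfun (hfun f.1)) I := hTcont _ (hfunCont f.1) hf0 hfP
    refine ⟨⟨⟨fun u => Tfun (hfun f.1) u.1, ?_⟩, ?_, ?_⟩, fun u => rfl⟩
    · exact continuousOn_iff_continuous_restrict.mp hc
    · exact hT0 _ hf0 hfP
    · exact hTP _ hf0 hfP
  choose Tmap hTmap using hTmap_ex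
  -- contraction estimate
  have hcontr : ContractingWith K Tmap := by
    constructor
    · exact_mod_cast hKlt
    · refine LipschitzWith.of_dist_le_mul ?_
      intro f g
      rw [Subtype.dist_eq, Subtype.dist_eq f g]
      have h0 : (0 : ℝ) ≤ ↑K * dist f.1 g.1 := mul_nonneg hK0 dist_nonneg
      rw [ContinuousMap.dist_le h0]
      intro u
      have hq1 := hidx1 u.1
      have hqP := hidxP u.1
      have hqI := hidxI u.1 u.2.1 u.2.2
      have hsI := hmapsinv (idx u.1) hq1 hqP u.1 hqI.1 hqI.2
      rw [hTmap f u, hTmap g u]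
      simp only [hTfun_def]
      have e1 : dist (F (idx u.1) ((u.1 - b (idx u.1)) / a (idx u.1))
            (hfun f.1 ((u.1 - b (idx u.1)) / a (idx u.1))))
          (F (idx u.1) ((u.1 - b (idx u.1)) / a (idx u.1))
            (hfun g.1 ((u.1 - b (idx u.1)) / a (idx u.1))))
          ≤ t (idx u.1) * dist (hfun f.1 ((u.1 - b (idx u.1)) / a (idx u.1)))
            (hfun g.1 ((u.1 - b (idx u.1)) / a (idx u.1))) := by
        rw [Real.dist_eq, Real.dist_eq]
        exact hFlip (idx u.1) hq1 hqP _ hsI _ _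
      have e2 : dist (hfun f.1 ((u.1 - b (idx u.1)) / a (idx u.1)))
          (hfun g.1 ((u.1 - b (idx u.1)) / a (idx u.1))) ≤ dist f.1 g.1 := by
        rw [hfun_eq f.1 _ hsI, hfun_eq g.1 _ hsI]
        exact ContinuousMap.dist_apply_le_dist _
      exact e1.trans (mul_le_mul (hKle _ hq1 hqP) e2 dist_nonneg hK0)
  -- the fixed point
  set g0 : ↥S := ContractingWith.fixedPoint Tmap hcontr with hg0_def
  have hg0fix : Tmap g0 = g0 := hcontr.fixedPoint_isFixedPt
  set g : ℝ → ℝ := hfun g0.1 with hg_def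
  have hg0e : g (x 0) = y 0 := by rw [hg_def, hfun_eq g0.1 (x 0) hx0I]; exact g0.2.1
  have hgPe : g (x P) = y P := by rw [hg_def, hfun_eq g0.1 (x P) hxPI]; exact g0.2.2
  have hgfix : ∀ u : ℝ, ∀ hu : u ∈ I, Tfun g u = g u := by
    intro u hu
    have h1 : (Tmap g0).1 ⟨u, hu⟩ = g0.1 ⟨u, hu⟩ := by rw [hg0fix]
    rw [hTmap g0 ⟨u, hu⟩] at h1
    rw [hg_def]
    rw [h1]
    exact (hfun_eq g0.1 u hu).symm
  refine ⟨g, ⟨?_, hg0e, hgPe, ?_⟩, ?_⟩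
  · -- continuity
    rw [hg_def]
    exact hfunCont g0.1
  · -- functional equation
    intro p hp1 hpP s hs
    have hm := hmem_l p hp1 hpP s hs
    have huI : a p * s + b p ∈ I :=
      ⟨le_trans (hxm 0 (p - 1) (by omega) (by omega)) hm.1, le_trans hm.2 (hxm p P hpP le_rfl)⟩
    have hfx := hgfix (a p * s + b p) huI
    rw [← hfx, hpiece g hg0e hgPe p hp1 hpP _ hm.1 hm.2,
      hinvval p hp1 hpP s (a p * s + b p) rfl]
  · -- uniqueness
    rintro g' ⟨hc', h0', hP', hfeq'⟩ u hu
    have hcr' : Continuous (fun u : ↥I => g' u.1) := continuousOn_iff_continuous_restrict.mp hc'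
    set f' : ↥S := ⟨⟨fun u : ↥I => g' u.1, hcr'⟩, h0', hP'⟩ with hf'_def
    have e0 : hfun f'.1 (x 0) = y 0 := by rw [hfun_eq f'.1 (x 0) hx0I]; exact h0'
    have eP : hfun f'.1 (x P) = y P := by rw [hfun_eq f'.1 (x P) hxPI]; exact hP'
    have hfix' : Tmap f' = f' := by
      apply Subtype.ext
      apply ContinuousMap.ext
      intro v
      rw [hTmap f' v]
      obtain ⟨hq3, hq4⟩ := hidxI v.1 v.2.1 v.2.2
      have hq1 := hidx1 v.1
      have hqP := hidxP v.1
      rw [hpiece (hfun f'.1) e0 eP (idx v.1) hq1 hqP v.1 hq3 hq4]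
      have hsI := hmapsinv (idx v.1) hq1 hqP v.1 hq3 hq4
      rw [hfun_eq f'.1 _ hsI]
      show F (idx v.1) _ (g' _) = g' v.1
      rw [← hfeq' (idx v.1) hq1 hqP _ hsI]
      congr 1
      have hap := ha (idx v.1) hq1 hqP
      field_simp
      ring
    have hfg : f' = g0 := hcontr.fixedPoint_unique hfix'
    calc g' u = f'.1 ⟨u, hu⟩ := rfl
      _ = g0.1 ⟨u, hu⟩ := by rw [hfg]
      _ = g u := (hfun_eq g0.1 u hu).symm
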